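/- Let K be a compact, second-countable, abelian topological group with Haar probability measure μ, let Γ be a countable dense subgroup of K, acting on K by translation, and let γ : Γ → circle be a group homomorphism. Then the following are equivalent: (i) there exists a measurable function f : K → circle such that for every c ∈ Γ, f(c · x) = γ(c) · f(x) for μ-almost every x ∈ K; (ii) there exists a continuous group homomorphism χ : K → circle with χ(c) = γ(c) for all c ∈ Γ. -/

import Mathlib

open MeasureTheory Filter

noncomputable instance : MeasurableSpace Circle := borel Circle
instance : BorelSpace Circle := ⟨rfl⟩

instance : SecondCountableTopology Circle :=
  inferInstanceAs (SecondCountableTopology (Submonoid.unitSphere ℂ))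

/-- A measurable function invariant (a.e.) under translation by a dense subgroup is a.e.
constant. -/
private lemma aux_aeconst {K : Type*} [CommGroup K] [TopologicalSpace K] [IsTopologicalGroup K]
    [CompactSpace K] [SecondCountableTopology K] [MeasurableSpace K] [BorelSpace K]
    (μ : Measure K) [μ.IsHaarMeasure] [IsProbabilityMeasure μ]
    (Γ : Subgroup K) (hdense : Dense (Γ : Set K))
    {g : K → Circle} (hg : Measurable g)
    (hinv : ∀ c : Γ, ∀ᵐ x ∂μ, g ((c : K) * x) = g x) :
    ∃ z : Circle, g =ᵐ[μ] Function.const K z := by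
  refine exists_eventuallyEq_const_of_forall_separating MeasurableSet fun U hU ↦ ?_
  have hs : Dense {k : K | (k • ·) ⁻¹' (g ⁻¹' U) =ᵐ[μ] (g ⁻¹' U)} := by
    refine hdense.mono ?_
    rintro k hk
    have h := hinv ⟨k, hk⟩
    show (fun x ↦ k • x) ⁻¹' (g ⁻¹' U) =ᵐ[μ] g ⁻¹' U
    refine Filter.eventuallyEq_set.2 ?_
    filter_upwards [h] with x hx
    simp only [Set.mem_preimage, smul_eq_mul, hx]
  have hconst := aeconst_of_dense_setOf_preimage_smul_ae (M := K)
    ((hg hU).nullMeasurableSet) hs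
  exact eventuallyConst_set.mp hconst

/-- Let `K` be a compact second-countable abelian group with Haar probability measure `μ` and
`Γ ≤ K` a countable dense subgroup acting on `K` by translation. A character `γ : Γ → circle`
admits a measurable eigenfunction `f : K → circle` (i.e. `f(c·x) = γ(c)·f(x)` a.e. for each
`c ∈ Γ`) if and only if `γ` extends to a continuous character `χ : K → circle`. -/
theorem stmt12 {K : Type*} [CommGroup K] [TopologicalSpace K] [IsTopologicalGroup K]
    [CompactSpace K] [SecondCountableTopology K] [MeasurableSpace K] [BorelSpace K]
    (μ : Measure K) [μ.IsHaarMeasure] [IsProbabilityMeasure μ]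
    (Γ : Subgroup K) [Countable Γ] (hdense : Dense (Γ : Set K))
    (γ : Γ →* Circle) :
    (∃ f : K → Circle, Measurable f ∧
      ∀ c : Γ, ∀ᵐ x ∂μ, f ((c : K) * x) = γ c * f x)
    ↔ ∃ χ : K →* Circle, Continuous χ ∧ ∀ c : Γ, χ (c : K) = γ c := by
  constructor
  · rintro ⟨f, hfm, hf⟩
    haveI : (ae μ).NeBot := ae_neBot.2 (IsProbabilityMeasure.ne_zero μ)
    -- Step 1: for each `y`, the function `x ↦ f (y*x) * (f x)⁻¹` is a.e. constant.
    have key : ∀ y : K, ∃ z : Circle,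
        (fun x ↦ f (y * x) * (f x)⁻¹) =ᵐ[μ] Function.const K z := by
      intro y
      refine aux_aeconst μ Γ hdense
        ((hfm.comp (measurable_const_mul y)).mul hfm.inv) fun c ↦ ?_
      have h1 := hf c
      have h2 : ∀ᵐ x ∂μ, f ((c : K) * (y * x)) = γ c * f (y * x) :=
        ((measurePreserving_mul_left μ y).quasiMeasurePreserving.tendsto_ae).eventually h1
      filter_upwards [h1, h2] with x e1 e2
      have hyx : y * ((c : K) * x) = (c : K) * (y * x) := mul_left_comm y c x
      rw [hyx, e2, e1, mul_inv, mul_mul_mul_comm, mul_inv_cancel, one_mul]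
    choose χ₀ hχ₀ using key
    have hP : ∀ y : K, ∀ᵐ x ∂μ, f (y * x) = χ₀ y * f x := by
      intro y
      filter_upwards [hχ₀ y] with x hx
      exact mul_inv_eq_iff_eq_mul.mp hx
    -- Step 2: `χ₀` is multiplicative.
    have hmul : ∀ y z : K, χ₀ (y * z) = χ₀ y * χ₀ z := by
      intro y z
      have h3 : ∀ᵐ x ∂μ, f (y * (z * x)) = χ₀ y * f (z * x) :=
        ((measurePreserving_mul_left μ z).quasiMeasurePreserving.tendsto_ae).eventually (hP y)
      obtain ⟨x, e1, e2, e3⟩ := ((hP (y * z)).and ((hP z).and h3)).exists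
      have : χ₀ (y * z) * f x = (χ₀ y * χ₀ z) * f x := by
        rw [← e1, mul_assoc y z x, e3, e2, mul_assoc]
      exact mul_right_cancel this
    -- Step 3: `χ₀` agrees with `γ` on `Γ`.
    have hγ : ∀ c : Γ, χ₀ (c : K) = γ c := by
      intro c
      obtain ⟨x, e1, e2⟩ := ((hP (c : K)).and (hf c)).exists
      exact mul_right_cancel (e1.symm.trans e2)
    -- Step 4: continuity of `χ₀` via an `L²` integral formula.
    have hFc : Continuous (fun z : Circle ↦ (z : ℂ)) := continuous_induced_dom
    set F : K → ℂ := fun x ↦ (f x : ℂ) with hF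
    have hFm : Measurable F := hFc.measurable.comp hfm
    have hF2 : MemLp F 2 μ := by
      refine MemLp.of_bound hFm.aestronglyMeasurable 1 (ae_of_all _ fun x ↦ ?_)
      simp [hF, Circle.norm_coe]
    haveI : Fact ((1 : ENNReal) ≤ 2) := ⟨one_le_two⟩
    set F2 : Lp ℂ 2 μ := hF2.toLp F with hF2def
    set m : C(K × K, K) := ⟨fun p ↦ p.1 * p.2, continuous_mul⟩ with hm
    have hTmp : ∀ y : K, MeasurePreserving (m.curry y) μ μ := fun y ↦
      measurePreserving_mul_left μ y
    have hTrans : Continuous fun y : K ↦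
        Lp.compMeasurePreserving (m.curry y) (hTmp y) F2 :=
      Continuous.compMeasurePreservingLp continuous_const m.curry.continuous hTmp
        (by norm_num)
    set Φ : K → ℂ := fun y ↦
      inner ℂ (F2) (Lp.compMeasurePreserving (m.curry y) (hTmp y) F2) with hΦdef
    have hΦc : Continuous Φ := Continuous.inner continuous_const hTrans
    have hΦ : ∀ y, Φ y = (χ₀ y : ℂ) := by
      intro y
      have h1 : (Lp.compMeasurePreserving (m.curry y) (hTmp y) F2 : K → ℂ)
          =ᵐ[μ] fun x ↦ F (y * x) := by
        refine (Lp.coeFn_compMeasurePreserving F2 (hTmp y)).trans ?_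
        have h2 : ∀ᵐ x ∂μ, F2 (y * x) = F (y * x) :=
          ((measurePreserving_mul_left μ y).quasiMeasurePreserving.tendsto_ae).eventually
            hF2.coeFn_toLp
        filter_upwards [h2] with x hx
        exact hx
      have hint : ∀ᵐ x ∂μ, (inner ℂ (F2 x)
          ((Lp.compMeasurePreserving (m.curry y) (hTmp y) F2 : Lp ℂ 2 μ) x) : ℂ)
          = (χ₀ y : ℂ) := by
        filter_upwards [h1, hF2.coeFn_toLp, hP y] with x hx1 hx2 hx3
        have hx3' : F (y * x) = (χ₀ y : ℂ) * F x := by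
          show ((f (y * x) : ℂ)) = (χ₀ y : ℂ) * (f x : ℂ)
          rw [hx3, Circle.coe_mul]
        rw [RCLike.inner_apply, hx2, hx1, hx3']
        have hconj : (starRingEnd ℂ) (F x) * F x = 1 := by
          rw [mul_comm, Complex.mul_conj]
          exact_mod_cast Circle.normSq_coe (f x)
        calc (χ₀ y : ℂ) * F x * (starRingEnd ℂ) (F x)
            = (χ₀ y : ℂ) * ((starRingEnd ℂ) (F x) * F x) := by ring
          _ = (χ₀ y : ℂ) := by rw [hconj, mul_one]
      rw [hΦdef]
      simp only
      rw [MeasureTheory.L2.inner_def, integral_congr_ae hint, integral_const]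
      simp
    have hχc : Continuous fun y ↦ (χ₀ y : ℂ) := hΦc.congr hΦ
    have hcont : Continuous χ₀ := continuous_induced_rng.mpr hχc
    exact ⟨MonoidHom.mk' χ₀ hmul, hcont, hγ⟩
  · rintro ⟨χ, hχc, hχ⟩
    refine ⟨χ, hχc.measurable, fun c ↦ ae_of_all _ fun x ↦ ?_⟩
    rw [map_mul, hχ c]
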